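/- Let n ≥ 2 and let v, w ∈ S_n be such that there exist subsets {i_1,…,i_r} and {j_1,…,j_s} of [n−1] with |i_h − j_l| > 1 for all h ∈ [r] and l ∈ [s], with v in the subgroup generated by s_{i_1},…,s_{i_r} and w in the subgroup generated by s_{j_1},…,s_{j_s}. If some Plücker relation degenerates to a monomial on X_v, or some Plücker relation degenerates to a monomial on X_w, then some Plücker relation degenerates to a monomial on X_{v∘w}. -/

import Mathlib

open Finset MvPolynomial

namespace DegSchubert

/-- The interval `[d] = {1,…,d}` (empty for `d = 0`). -/
def seg (d : ℕ) : Finset ℕ := Finset.Icc 1 d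

/-- Number of inversions of a list of naturals. -/
def inv : List ℕ → ℕ
  | [] => 0
  | a :: t => t.countP (fun b => decide (b < a)) + inv t

/-- Signed Plücker variable attached to a sequence: zero if two entries coincide,
otherwise the sign of the sorting permutation times the variable of the underlying set. -/
noncomputable def pseq (l : List ℕ) : MvPolynomial (Finset ℕ) ℂ :=
  if l.Nodup then ((-1 : ℂ) ^ inv l) • X l.toFinset else 0

/-- `J′`: replace the first `k` entries of `J` by the entries of `L` in the (0-indexed)
positions belonging to `R`, taken in increasing order. -/
def Jrep (J L : List ℕ) (k : ℕ) (R : Finset ℕ) : List ℕ :=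
  (R.sort (· ≤ ·)).map (fun r => L.getD r 0) ++ J.drop k

/-- `L′`: replace the entries of `L` in the (0-indexed) positions belonging to `R`
by the first `k` entries of `J`, in order. -/
def Lrep (L J : List ℕ) (R : Finset ℕ) : List ℕ :=
  (List.range L.length).map
    (fun p => if p ∈ R then J.getD ((R.filter (· < p)).card) 0 else L.getD p 0)

/-- The Plücker relation `R^k_{J,L}` (positions of `L` are 0-indexed). -/
noncomputable def pluecker (k : ℕ) (J L : List ℕ) : MvPolynomial (Finset ℕ) ℂ :=
  pseq J * pseq L -
    ∑ R ∈ (Finset.range L.length).powersetCard k, pseq (Jrep J L k R) * pseq (Lrep L J R)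

/-- Validity of the data `(k, J, L)` of a Plücker relation for `S_n`. -/
def ValidPair (n k : ℕ) (J L : List ℕ) : Prop :=
  J.Nodup ∧ L.Nodup ∧ (∀ a ∈ J, a ∈ seg n) ∧ (∀ a ∈ L, a ∈ seg n) ∧
    1 ≤ J.length ∧ J.length ≤ L.length ∧ L.length ≤ n - 1 ∧ 1 ≤ k ∧ k ≤ J.length

/-- Weight of a Plücker variable. -/
def wt (n : ℕ) (I : Finset ℕ) : ℕ := (I.filter (fun r => I.card ≤ r ∧ r ≤ n - 1)).card

/-- Weight of a monomial. -/
def mwt (n : ℕ) (m : Finset ℕ →₀ ℕ) : ℕ := m.sum (fun I e => e * wt n I)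

/-- The initial form of a polynomial: the sum of its terms of minimal weight. -/
noncomputable def initw (n : ℕ) (f : MvPolynomial (Finset ℕ) ℂ) : MvPolynomial (Finset ℕ) ℂ :=
  ∑ m ∈ f.support.filter (fun m => ∀ m' ∈ f.support, mwt n m ≤ mwt n m'),
    monomial m (f.coeff m)

/-- The componentwise ("dominance") order on finsets of naturals of equal size. -/
def domLE (A B : Finset ℕ) : Prop :=
  List.Forall₂ (· ≤ ·) (A.sort (· ≤ ·)) (B.sort (· ≤ ·))

/-- Valid index sets for Plücker variables. -/
def ValidIndex (n : ℕ) (I : Finset ℕ) : Prop :=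
  I.Nonempty ∧ I ⊆ seg n ∧ I.card ≤ n - 1

/-- The ideal generated by the Plücker variables vanishing on the Schubert variety `X_w`. -/
noncomputable def vanishIdeal (n : ℕ) (w : Equiv.Perm ℕ) : Ideal (MvPolynomial (Finset ℕ) ℂ) :=
  Ideal.span { f | ∃ I : Finset ℕ, ValidIndex n I ∧ ¬ domLE I ((seg I.card).image ⇑w) ∧ f = X I }

/-- The set of Plücker relations. -/
def plueckerSet (n : ℕ) : Set (MvPolynomial (Finset ℕ) ℂ) :=
  { f | ∃ k J L, ValidPair n k J L ∧ f = pluecker k J L }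

/-- The set of initial forms of the Plücker relations. -/
def initPlueckerSet (n : ℕ) : Set (MvPolynomial (Finset ℕ) ℂ) :=
  { f | ∃ k J L, ValidPair n k J L ∧ f = initw n (pluecker k J L) }

/-- The Schubert ideal `I_w`. -/
noncomputable def schubIdeal (n : ℕ) (w : Equiv.Perm ℕ) : Ideal (MvPolynomial (Finset ℕ) ℂ) :=
  Ideal.span (plueckerSet n) ⊔ vanishIdeal n w

/-- The degenerate Schubert ideal `J^a_w`. -/
noncomputable def degIdeal (n : ℕ) (w : Equiv.Perm ℕ) : Ideal (MvPolynomial (Finset ℕ) ℂ) :=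
  Ideal.span (initPlueckerSet n) ⊔ vanishIdeal n w

/-- `J^a_w` contains a product of two Plücker variables. -/
def ContainsDeg2Mono (n : ℕ) (w : Equiv.Perm ℕ) : Prop :=
  ∃ A B : Finset ℕ, ValidIndex n A ∧ ValidIndex n B ∧ X A * X B ∈ degIdeal n w

/-- `u^{i,j} = #{a ∈ [i] : u(a) ≥ j}`. -/
def uij (u : Equiv.Perm ℕ) (i j : ℕ) : ℕ := ((seg i).filter (fun a => j ≤ u a)).card

/-- Bruhat order on `S_n`. -/
def bruhatLE (n : ℕ) (v u : Equiv.Perm ℕ) : Prop :=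
  ∀ i ∈ seg n, ∀ j ∈ seg n, uij v i j ≤ uij u i j

/-- The Plücker relation `R^k_{J,L}` degenerates to a monomial on `X_u`: the image of its
initial form in the quotient by the vanishing Plücker variables is a nonzero scalar multiple
of a single monomial. -/
def DegToMono (n : ℕ) (u : Equiv.Perm ℕ) (k : ℕ) (J L : List ℕ) : Prop :=
  ∃ (m : Finset ℕ →₀ ℕ) (a : ℂ),
    Ideal.Quotient.mk (vanishIdeal n u) (initw n (pluecker k J L)) =
      Ideal.Quotient.mk (vanishIdeal n u) (monomial m a) ∧
    Ideal.Quotient.mk (vanishIdeal n u) (monomial m a) ≠ 0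

/-- `F(K) ≤ u([#K])` for a sequence `K`. -/
def seqLE (u : Equiv.Perm ℕ) (K : List ℕ) : Prop :=
  domLE K.toFinset ((seg K.length).image ⇑u)

def lo (C : Finset ℕ) (x : ℕ) : ℕ := (C.filter (· ≤ x)).card

lemma countP_le_of_forall₂ (l1 l2 : List ℕ) (h : List.Forall₂ (· ≤ ·) l1 l2) (x : ℕ) :
    l2.countP (fun y => decide (y ≤ x)) ≤ l1.countP (fun y => decide (y ≤ x)) := by
  induction h with
  | nil => simp
  | @cons a b t1 t2 hab _ ih =>
    rw [List.countP_cons, List.countP_cons]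
    rcases le_or_gt b x with hb | hb
    · have ha : a ≤ x := le_trans hab hb
      simp [hb, ha]; omega
    · have hb' : ¬ (b ≤ x) := not_le.mpr hb
      simp [hb']; omega

lemma forall₂_of_countP (l1 : List ℕ) : ∀ (l2 : List ℕ),
    l1.Pairwise (· < ·) → l2.Pairwise (· < ·) → l1.length = l2.length →
    (∀ x, l2.countP (fun y => decide (y ≤ x)) ≤ l1.countP (fun y => decide (y ≤ x))) →
    List.Forall₂ (· ≤ ·) l1 l2 := by
  induction l1 with
  | nil =>
    intro l2 _ _ hlen _
    cases l2 with
    | nil => exact List.Forall₂.nil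
    | cons b t2 => simp at hlen
  | cons a t1 ih =>
    intro l2 hs1 hs2 hlen h
    cases l2 with
    | nil => simp at hlen
    | cons b t2 =>
      have hab : a ≤ b := by
        by_contra hab
        push_neg at hab
        have h1 : (a :: t1).countP (fun y => decide (y ≤ b)) = 0 := by
          rw [List.countP_eq_zero]
          intro y hy
          rw [List.mem_cons] at hy
          have : a ≤ y := by
            rcases hy with rfl | hy
            · exact le_refl _
            · exact le_of_lt (List.rel_of_pairwise_cons hs1 hy)
          simp; omega
        have h2 := h b
        rw [h1, List.countP_cons] at h2
        simp at h2
      constructor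
      · exact hab
      · apply ih t2 hs1.of_cons hs2.of_cons (by simpa using hlen)
        intro x
        have hx := h x
        rw [List.countP_cons, List.countP_cons] at hx
        rcases le_or_gt b x with hb | hb
        · have ha : a ≤ x := le_trans hab hb
          simp [hb, ha] at hx; omega
        · have ht2 : t2.countP (fun y => decide (y ≤ x)) = 0 := by
            rw [List.countP_eq_zero]
            intro y hy
            have : b < y := List.rel_of_pairwise_cons hs2 hy
            simp; omega
          omega

lemma lo_eq_countP (C : Finset ℕ) (x : ℕ) :
    lo C x = (C.sort (· ≤ ·)).countP (fun y => decide (y ≤ x)) := by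
  classical
  have h1 : lo C x = Multiset.card (Multiset.filter (· ≤ x) C.val) := by
    rw [lo, Finset.card, Finset.filter_val]
  rw [h1, ← Finset.sort_eq C (· ≤ ·), Multiset.filter_coe]
  simp [List.countP_eq_length_filter]

lemma domLE_iff (C D : Finset ℕ) (hcard : C.card = D.card) :
    domLE C D ↔ ∀ x, lo D x ≤ lo C x := by
  constructor
  · intro h x
    rw [lo_eq_countP, lo_eq_countP]
    exact countP_le_of_forall₂ _ _ h x
  · intro h
    apply forall₂_of_countP _ _ (Finset.sortedLT_sort C).pairwise (Finset.sortedLT_sort D).pairwise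
      (by simp [hcard])
    intro x
    have := h x
    rw [lo_eq_countP, lo_eq_countP] at this
    exact this

def SplitPres (u : Equiv.Perm ℕ) (x : ℕ) : Prop := ∀ y, u y ≤ x ↔ y ≤ x

lemma splitPres_of_closure {C : Finset ℕ} {u : Equiv.Perm ℕ}
    (hu : u ∈ Subgroup.closure ((fun t => Equiv.swap t (t + 1)) '' (C : Set ℕ)))
    {x : ℕ} (hx : x ∉ C) : SplitPres u x := by
  induction hu using Subgroup.closure_induction with
  | mem g hg =>
    obtain ⟨t, ht, rfl⟩ := hg
    intro y
    have htx : t ≠ x := fun h => hx (h ▸ ht)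
    rcases eq_or_ne y t with rfl | h1
    · rw [Equiv.swap_apply_left]; omega
    rcases eq_or_ne y (t + 1) with rfl | h2
    · rw [Equiv.swap_apply_right]; omega
    · rw [Equiv.swap_apply_of_ne_of_ne h1 h2]
  | one => intro y; rfl
  | mul g h _ _ ihg ihh =>
    intro y
    rw [Equiv.Perm.mul_apply, ihg (h y), ihh y]
  | inv g _ ihg =>
    intro y
    have h2 := ihg (g⁻¹ y)
    rw [show g (g⁻¹ y) = y from Equiv.apply_symm_apply g y] at h2
    exact h2.symm

lemma apply_zero_of_closure {C : Finset ℕ} {u : Equiv.Perm ℕ}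
    (hu : u ∈ Subgroup.closure ((fun t => Equiv.swap t (t + 1)) '' (C : Set ℕ)))
    (hC : ∀ t ∈ C, 1 ≤ t) : u 0 = 0 := by
  have h0 : (0 : ℕ) ∉ C := fun h => by have := hC 0 h; omega
  have := (splitPres_of_closure hu h0) 0
  omega

lemma lo_image_of_splitPres (u : Equiv.Perm ℕ) (S : Finset ℕ) (x : ℕ)
    (h : SplitPres u x) : lo (S.image u) x = lo S x := by
  classical
  have h1 : (S.image u).filter (· ≤ x) = (S.filter (· ≤ x)).image u := by
    rw [Finset.filter_image]
    congr 1
    apply Finset.filter_congr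
    intro y _
    simp [h y]
  rw [lo, h1, Finset.card_image_of_injective _ u.injective]
  rfl

lemma lo_seg (c x : ℕ) : lo (seg c) x = min c x := by
  have : (seg c).filter (· ≤ x) = Finset.Icc 1 (min c x) := by
    ext y
    simp [seg, Finset.mem_filter, Finset.mem_Icc]
    omega
  rw [lo, this, Nat.card_Icc]
  omega

lemma lo_le_of_subset {I : Finset ℕ} {n : ℕ} (hI : I ⊆ Finset.Icc 1 n) (x : ℕ) :
    lo I x ≤ min I.card x := by
  apply le_min
  · exact Finset.card_le_card (Finset.filter_subset _ _)
  · have : I.filter (· ≤ x) ⊆ Finset.Icc 1 x := by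
      intro y hy
      rw [Finset.mem_filter] at hy
      have := hI hy.1
      rw [Finset.mem_Icc] at *
      omega
    calc (I.filter (· ≤ x)).card ≤ (Finset.Icc 1 x).card := Finset.card_le_card this
    _ = x := by rw [Nat.card_Icc]; omega

lemma lo_image_le {u : Equiv.Perm ℕ} (hu0 : u 0 = 0) (c x : ℕ) :
    lo ((seg c).image u) x ≤ min c x := by
  apply le_min
  · calc lo ((seg c).image u) x ≤ ((seg c).image u).card :=
        Finset.card_le_card (Finset.filter_subset _ _)
    _ = (seg c).card := Finset.card_image_of_injective _ u.injective
    _ = c := by rw [seg, Nat.card_Icc]; omega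
  · have hsub : ((seg c).image u).filter (· ≤ x) ⊆ Finset.Icc 1 x := by
      intro y hy
      rw [Finset.mem_filter] at hy
      obtain ⟨hy1, hy2⟩ := hy
      rw [Finset.mem_image] at hy1
      obtain ⟨b, hb, rfl⟩ := hy1
      rw [seg, Finset.mem_Icc] at hb
      have : u b ≠ 0 := by
        intro h
        have : b = 0 := u.injective (h.trans hu0.symm)
        omega
      rw [Finset.mem_Icc]
      omega
    calc _ ≤ (Finset.Icc 1 x).card := Finset.card_le_card hsub
    _ = x := by rw [Nat.card_Icc]; omega

lemma commute_of_closures {A B : Finset ℕ} {v w : Equiv.Perm ℕ}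
    (hsep : ∀ a ∈ A, ∀ b ∈ B, 1 < |(a : ℤ) - (b : ℤ)|)
    (hv : v ∈ Subgroup.closure ((fun t => Equiv.swap t (t + 1)) '' (A : Set ℕ)))
    (hw : w ∈ Subgroup.closure ((fun t => Equiv.swap t (t + 1)) '' (B : Set ℕ))) :
    Commute v w := by
  have key : ∀ a ∈ A, ∀ b ∈ B,
      Commute (Equiv.swap a (a + 1)) (Equiv.swap b (b + 1)) := by
    intro a ha b hb
    have hab := hsep a ha b hb
    have hab' : a + 2 ≤ b ∨ b + 2 ≤ a := by
      rcases abs_cases ((a : ℤ) - (b : ℤ)) with ⟨he, _⟩ | ⟨he, _⟩ <;> rw [he] at hab <;> omega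
    apply Equiv.Perm.Disjoint.commute
    intro y
    rcases eq_or_ne y a with rfl | h1
    · right
      apply Equiv.swap_apply_of_ne_of_ne <;> omega
    rcases eq_or_ne y (a + 1) with rfl | h2
    · right
      apply Equiv.swap_apply_of_ne_of_ne <;> omega
    · left; exact Equiv.swap_apply_of_ne_of_ne h1 h2
  induction hv using Subgroup.closure_induction with
  | mem g hg =>
    obtain ⟨a, ha, rfl⟩ := hg
    induction hw using Subgroup.closure_induction with
    | mem h hh =>
      obtain ⟨b, hb, rfl⟩ := hh
      exact key a ha b hb
    | one => exact Commute.one_right _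
    | mul p q _ _ ihp ihq => exact Commute.mul_right ihp ihq
    | inv p _ ihp => exact Commute.inv_right ihp
  | one => exact Commute.one_left _
  | mul p q _ _ ihp ihq => exact Commute.mul_left ihp ihq
  | inv p _ ihp => exact Commute.inv_left ihp

def Pdead (n : ℕ) (u : Equiv.Perm ℕ) (I : Finset ℕ) : Prop :=
  ValidIndex n I ∧ ¬ domLE I ((seg I.card).image ⇑u)

open Classical in
noncomputable def phi (n : ℕ) (u : Equiv.Perm ℕ) :
    MvPolynomial (Finset ℕ) ℂ →ₐ[ℂ] MvPolynomial (Finset ℕ) ℂ :=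
  aeval (fun I => if Pdead n u I then 0 else X I)

lemma X_mem_vanish {n : ℕ} {u : Equiv.Perm ℕ} {I : Finset ℕ} (h : Pdead n u I) :
    (X I : MvPolynomial (Finset ℕ) ℂ) ∈ vanishIdeal n u :=
  Ideal.subset_span ⟨I, h.1, h.2, rfl⟩

lemma phi_eq_zero_of_mem {n : ℕ} {u : Equiv.Perm ℕ} {f : MvPolynomial (Finset ℕ) ℂ}
    (hf : f ∈ vanishIdeal n u) : phi n u f = 0 := by
  classical
  have : vanishIdeal n u ≤ RingHom.ker (phi n u).toRingHom := by
    rw [vanishIdeal, Ideal.span_le]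
    rintro f ⟨I, h1, h2, rfl⟩
    simp only [SetLike.mem_coe, RingHom.mem_ker, AlgHom.toRingHom_eq_coe, RingHom.coe_coe]
    rw [phi, aeval_X, if_pos ⟨h1, h2⟩]
  exact this hf

lemma phi_monomial_alive {n : ℕ} {u : Equiv.Perm ℕ} {m : Finset ℕ →₀ ℕ} {a : ℂ}
    (h : ∀ I ∈ m.support, ¬ Pdead n u I) : phi n u (monomial m a) = monomial m a := by
  classical
  rw [phi, aeval_monomial]
  have : (m.prod fun I e => (if Pdead n u I then 0 else X I) ^ e)
      = m.prod fun I e => (X I : MvPolynomial (Finset ℕ) ℂ) ^ e := by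
    apply Finsupp.prod_congr
    intro I hI
    rw [if_neg (h I hI)]
  rw [this, monomial_eq]
  rfl

lemma phi_monomial_dead {n : ℕ} {u : Equiv.Perm ℕ} {m : Finset ℕ →₀ ℕ} {a : ℂ}
    {I0 : Finset ℕ} (hI0 : I0 ∈ m.support) (h : Pdead n u I0) :
    phi n u (monomial m a) = 0 := by
  classical
  rw [phi, aeval_monomial]
  have : (m.prod fun I e => ((if Pdead n u I then 0 else X I : MvPolynomial (Finset ℕ) ℂ)) ^ e) = 0 := by
    rw [Finsupp.prod]
    apply Finset.prod_eq_zero hI0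
    rw [if_pos h]
    exact zero_pow (Finsupp.mem_support_iff.mp hI0)
  rw [this, mul_zero]

lemma monomial_mem_of_dead {n : ℕ} {u : Equiv.Perm ℕ} {m : Finset ℕ →₀ ℕ} {a : ℂ}
    {I0 : Finset ℕ} (hI0 : I0 ∈ m.support) (h : Pdead n u I0) :
    (monomial m a : MvPolynomial (Finset ℕ) ℂ) ∈ vanishIdeal n u := by
  have hle : Finsupp.single I0 1 ≤ m := by
    rw [Finsupp.single_le_iff]
    exact Nat.one_le_iff_ne_zero.mpr (Finsupp.mem_support_iff.mp hI0)
  have : (monomial m a : MvPolynomial (Finset ℕ) ℂ)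
      = X I0 * monomial (m - Finsupp.single I0 1) a := by
    rw [X, monomial_mul, one_mul, add_tsub_cancel_of_le hle]
  rw [this]
  exact Ideal.mul_mem_right _ _ (X_mem_vanish h)

lemma sub_phi_mem (n : ℕ) (u : Equiv.Perm ℕ) (f : MvPolynomial (Finset ℕ) ℂ) :
    f - phi n u f ∈ vanishIdeal n u := by
  classical
  have h1 : phi n u f = ∑ m ∈ f.support, phi n u (monomial m (coeff m f)) := by
    rw [← map_sum]
    congr 1
    exact f.as_sum
  have h2 : f - phi n u f
      = ∑ m ∈ f.support, (monomial m (coeff m f) - phi n u (monomial m (coeff m f))) := by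
    rw [Finset.sum_sub_distrib, ← h1, ← f.as_sum]
  rw [h2]
  apply Ideal.sum_mem
  intro m hm
  by_cases hd : ∃ I ∈ m.support, Pdead n u I
  · obtain ⟨I0, hI0, hP⟩ := hd
    rw [phi_monomial_dead hI0 hP, sub_zero]
    exact monomial_mem_of_dead hI0 hP
  · push_neg at hd
    rw [phi_monomial_alive hd, sub_self]
    exact Ideal.zero_mem _

lemma map_getD_range (l : List ℕ) (k : ℕ) (hk : k ≤ l.length) :
    (List.range k).map (fun i => l.getD i 0) = l.take k := by
  apply List.ext_getElem
  · simp; omega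
  · intro i h1 h2
    simp only [List.length_map, List.length_range] at h1
    simp only [List.getElem_map, List.getElem_range, List.getElem_take]
    exact List.getD_eq_getElem l 0 (by omega)

def rnk (R : Finset ℕ) (p : ℕ) : ℕ := (R.filter (· < p)).card

lemma rnk_strictMonoOn (R : Finset ℕ) {p q : ℕ} (hp : p ∈ R) (hq : q ∈ R) (hpq : p < q) :
    rnk R p < rnk R q := by
  apply Finset.card_lt_card
  constructor
  · intro y hy
    rw [Finset.mem_filter] at *
    exact ⟨hy.1, by omega⟩
  · intro hsub
    have h1 : p ∈ R.filter (· < q) := Finset.mem_filter.mpr ⟨hp, hpq⟩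
    have h2 := hsub h1
    rw [Finset.mem_filter] at h2
    omega

lemma rnk_lt (R : Finset ℕ) {p : ℕ} (hp : p ∈ R) : rnk R p < R.card := by
  apply Finset.card_lt_card
  constructor
  · exact Finset.filter_subset _ _
  · intro hsub
    have := hsub hp
    rw [Finset.mem_filter] at this
    omega

lemma rnk_injOn (R : Finset ℕ) : Set.InjOn (rnk R) R := by
  intro p hp q hq hpq
  by_contra hne
  rcases lt_or_gt_of_ne hne with h | h
  · exact absurd hpq (ne_of_lt (rnk_strictMonoOn R hp hq h))
  · exact absurd hpq.symm (ne_of_lt (rnk_strictMonoOn R hq hp h))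

lemma image_rnk (R : Finset ℕ) : R.image (rnk R) = Finset.range R.card := by
  apply Finset.eq_of_subset_of_card_le
  · intro y hy
    rw [Finset.mem_image] at hy
    obtain ⟨p, hp, rfl⟩ := hy
    rw [Finset.mem_range]
    exact rnk_lt R hp
  · rw [Finset.card_range, Finset.card_image_of_injOn (rnk_injOn R)]

lemma map_rnk_val (R : Finset ℕ) : R.val.map (rnk R) = (Finset.range R.card).val := by
  rw [← image_rnk R, Finset.image_val_of_injOn (rnk_injOn R)]

lemma range_val_coe (d : ℕ) : (Finset.range d).val = ↑(List.range d) := rfl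

lemma perm_JrepLrep (J L : List ℕ) (k : ℕ) (hk : k ≤ J.length) (R : Finset ℕ)
    (hR : R ∈ (Finset.range L.length).powersetCard k) :
    (Jrep J L k R ++ Lrep L J R).Perm (J ++ L) := by
  classical
  rw [Finset.mem_powersetCard] at hR
  obtain ⟨hRsub, hRcard⟩ := hR
  rw [← Multiset.coe_eq_coe]
  have hcoe : ∀ (l1 l2 : List ℕ), (↑(l1 ++ l2) : Multiset ℕ) = ↑l1 + ↑l2 := fun l1 l2 =>
    (Multiset.coe_add l1 l2).symm
  rw [hcoe, hcoe, Jrep, hcoe]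
  set f : ℕ → ℕ := fun p => if p ∈ R then J.getD (rnk R p) 0 else L.getD p 0 with hf
  have hLrep : (↑(Lrep L J R) : Multiset ℕ) = Multiset.map f ((Finset.range L.length).val) := by
    rw [Lrep, range_val_coe, ← Multiset.map_coe]
    rfl
  -- split range into R and complement
  have hfilter : Multiset.filter (· ∈ R) (Finset.range L.length).val = R.val := by
    have : Finset.filter (· ∈ R) (Finset.range L.length) = R := by
      apply Finset.ext
      intro p
      simp only [Finset.mem_filter, Finset.mem_range]
      constructor
      · exact fun h => h.2
      · intro hp
        exact ⟨Finset.mem_range.mp (hRsub hp), hp⟩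
    calc Multiset.filter (· ∈ R) (Finset.range L.length).val
        = (Finset.filter (· ∈ R) (Finset.range L.length)).val := (Finset.filter_val _ _).symm
      _ = R.val := by rw [this]
  have hsplit : (Finset.range L.length).val
      = R.val + Multiset.filter (· ∉ R) (Finset.range L.length).val := by
    rw [← hfilter]
    exact (Multiset.filter_add_not _ _).symm
  have hmapR : Multiset.map f R.val = ↑(J.take k) := by
    have h1 : Multiset.map f R.val = Multiset.map (fun p => J.getD (rnk R p) 0) R.val := by
      apply Multiset.map_congr rfl
      intro p hp
      rw [hf]
      simp only [rnk]
      rw [if_pos (by exact hp)]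
    rw [h1]
    have h2 : Multiset.map (fun p => J.getD (rnk R p) 0) R.val
        = Multiset.map (fun i => J.getD i 0) (R.val.map (rnk R)) := by
      rw [Multiset.map_map]
      rfl
    rw [h2, map_rnk_val, hRcard, range_val_coe, Multiset.map_coe,
      map_getD_range J k hk]
  have hmapNR : Multiset.map f (Multiset.filter (· ∉ R) (Finset.range L.length).val)
      = Multiset.map (fun p => L.getD p 0) (Multiset.filter (· ∉ R) (Finset.range L.length).val) := by
    apply Multiset.map_congr rfl
    intro p hp
    rw [Multiset.mem_filter] at hp
    exact if_neg hp.2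
  have hsortR : (↑((R.sort (· ≤ ·)).map (fun r => L.getD r 0)) : Multiset ℕ)
      = Multiset.map (fun p => L.getD p 0) R.val := by
    rw [← Finset.sort_eq R (· ≤ ·)]
    exact (Multiset.map_coe _ _).symm
  have hLfull : Multiset.map (fun p => L.getD p 0) (Finset.range L.length).val = ↑L := by
    rw [range_val_coe, Multiset.map_coe, map_getD_range L L.length (le_refl _),
      List.take_length]
  have hJfull : (↑(J.take k) : Multiset ℕ) + ↑(J.drop k) = ↑J := by
    rw [Multiset.coe_add, List.take_append_drop]
  calc (↑((R.sort (· ≤ ·)).map (fun r => L.getD r 0)) : Multiset ℕ) + ↑(J.drop k) + ↑(Lrep L J R)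
      = Multiset.map (fun p => L.getD p 0) R.val + ↑(J.drop k)
        + (Multiset.map f R.val
           + Multiset.map f (Multiset.filter (· ∉ R) (Finset.range L.length).val)) := by
        rw [hsortR, hLrep]
        congr 1
        rw [hsplit, Multiset.map_add]
        congr 2
        rw [← hsplit]
    _ = (↑(J.take k) + ↑(J.drop k))
        + (Multiset.map (fun p => L.getD p 0) R.val
           + Multiset.map (fun p => L.getD p 0) (Multiset.filter (· ∉ R) (Finset.range L.length).val)) := by
        rw [hmapR, hmapNR]; abel
    _ = ↑J + ↑L := by
        rw [hJfull]
        congr 1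
        rw [← Multiset.map_add, ← hsplit, hLfull]

lemma support_pseq_mul {M N : List ℕ} {m : Finset ℕ →₀ ℕ}
    (hm : m ∈ (pseq M * pseq N).support) :
    M.Nodup ∧ N.Nodup ∧ m = Finsupp.single M.toFinset 1 + Finsupp.single N.toFinset 1 := by
  by_cases hM : M.Nodup
  · by_cases hN : N.Nodup
    · refine ⟨hM, hN, ?_⟩
      rw [pseq, pseq, if_pos hM, if_pos hN] at hm
      have heq : ((-1 : ℂ) ^ inv M • X M.toFinset) * ((-1 : ℂ) ^ inv N • X N.toFinset)
          = ((-1 : ℂ) ^ inv M * (-1 : ℂ) ^ inv N) •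
            (monomial (Finsupp.single M.toFinset 1 + Finsupp.single N.toFinset 1)
              (1 : ℂ)) := by
        rw [smul_mul_smul_comm]
        congr 1
        rw [X, X, monomial_mul, one_mul]
      rw [heq] at hm
      have h3 := MvPolynomial.support_monomial_subset (Finsupp.support_smul hm)
      rwa [Finset.mem_singleton] at h3
    · simp only [pseq, if_neg hN, mul_zero] at hm
      simp at hm
  · simp only [pseq, if_neg hM, zero_mul] at hm
    simp at hm

lemma support_pluecker {k : ℕ} {J L : List ℕ} (hk : k ≤ J.length)
    {m : Finset ℕ →₀ ℕ} (hm : m ∈ (pluecker k J L).support) :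
    ∃ P Q : List ℕ, P.Nodup ∧ Q.Nodup ∧ P.length = J.length ∧ Q.length = L.length ∧
      (P ++ Q).Perm (J ++ L) ∧
      m = Finsupp.single P.toFinset 1 + Finsupp.single Q.toFinset 1 := by
  classical
  rw [pluecker] at hm
  have h1 := MvPolynomial.support_sub _ _ _ hm
  rw [Finset.mem_union] at h1
  rcases h1 with h1 | h1
  · obtain ⟨hM, hN, heq⟩ := support_pseq_mul h1
    exact ⟨J, L, hM, hN, rfl, rfl, List.Perm.refl _, heq⟩
  · have h2 := MvPolynomial.support_sum h1
    rw [Finset.mem_biUnion] at h2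
    obtain ⟨R, hR, hmem⟩ := h2
    obtain ⟨hM, hN, heq⟩ := support_pseq_mul hmem
    have hperm := perm_JrepLrep J L k hk R hR
    have hRcard : R.card = k := (Finset.mem_powersetCard.mp hR).2
    refine ⟨Jrep J L k R, Lrep L J R, hM, hN, ?_, ?_, hperm, heq⟩
    · rw [Jrep]
      simp only [List.length_append, List.length_map, Finset.length_sort, List.length_drop]
      omega
    · rw [Lrep]
      simp

section
variable {n : ℕ} {v w : Equiv.Perm ℕ} {A B : Finset ℕ}
  (hA : A ⊆ seg (n - 1)) (hB : B ⊆ seg (n - 1))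
  (hsep : ∀ a ∈ A, ∀ b ∈ B, 1 < |(a : ℤ) - (b : ℤ)|)
  (hv : v ∈ Subgroup.closure ((fun t => Equiv.swap t (t + 1)) '' (A : Set ℕ)))
  (hw : w ∈ Subgroup.closure ((fun t => Equiv.swap t (t + 1)) '' (B : Set ℕ)))

include hA hB hsep hv hw

lemma image_mul_card (u : Equiv.Perm ℕ) (I : Finset ℕ) :
    I.card = ((seg I.card).image u).card := by
  rw [Finset.card_image_of_injective _ u.injective, seg, Nat.card_Icc]
  omega

omit hA hB hsep hv hw

lemma notin_A_of_in_B (hsep : ∀ a ∈ A, ∀ b ∈ B, 1 < |(a : ℤ) - (b : ℤ)|)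
    {x : ℕ} (hx : x ∈ B) : x ∉ A := by
  intro hxA
  have := hsep x hxA x hx
  simp at this

include hA hB hsep hv hw

lemma vw_zero : (v * w) 0 = 0 := by
  have h1 : ∀ t ∈ A, 1 ≤ t := fun t ht => by
    have := hA ht; rw [seg, Finset.mem_Icc] at this; omega
  have h2 : ∀ t ∈ B, 1 ≤ t := fun t ht => by
    have := hB ht; rw [seg, Finset.mem_Icc] at this; omega
  rw [Equiv.Perm.mul_apply, apply_zero_of_closure hw h2, apply_zero_of_closure hv h1]

lemma image_vw_eq {x : ℕ} (hx : x ∉ B) (S : Finset ℕ) :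
    lo (S.image (v * w)) x = lo (S.image v) x := by
  have hcomm : v * w = w * v := commute_of_closures hsep hv hw
  rw [hcomm]
  have : S.image ⇑(w * v) = (S.image ⇑v).image ⇑w := by
    rw [Finset.image_image]
    rfl
  rw [this, lo_image_of_splitPres w _ x (splitPres_of_closure hw hx)]

lemma alive_transfer {I : Finset ℕ} (h : domLE I ((seg I.card).image v)) :
    domLE I ((seg I.card).image (v * w)) := by
  rw [domLE_iff _ _ (image_mul_card hA hB hsep hv hw v I)] at h
  rw [domLE_iff _ _ (image_mul_card hA hB hsep hv hw (v * w) I)]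
  intro x
  by_cases hxB : x ∈ B
  · have hxA : x ∉ A := notin_A_of_in_B hsep hxB
    calc lo ((seg I.card).image (v * w)) x ≤ min I.card x :=
          lo_image_le (vw_zero hA hB hsep hv hw) _ _
    _ = lo (seg I.card) x := (lo_seg _ _).symm
    _ = lo ((seg I.card).image v) x :=
        (lo_image_of_splitPres v _ x (splitPres_of_closure hv hxA)).symm
    _ ≤ lo I x := h x
  · rw [image_vw_eq hA hB hsep hv hw hxB]
    exact h x

/-- Core lemma: a dead variable of a monomial sharing its multiset with an alive
monomial stays dead for `v * w`. -/
lemma dead_transfer {P1 Q1 P2 Q2 : List ℕ} {n' : ℕ}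
    (hn1 : P1.Nodup) (hn2 : Q1.Nodup) (hn3 : P2.Nodup) (hn4 : Q2.Nodup)
    (hlP : P1.length = P2.length) (hlQ : Q1.length = Q2.length)
    (hperm : (P1 ++ Q1).Perm (P2 ++ Q2))
    (hel : ∀ y ∈ P2 ++ Q2, y ∈ Finset.Icc 1 n')
    (halive1 : domLE P1.toFinset ((seg P1.toFinset.card).image v))
    (halive2 : domLE Q1.toFinset ((seg Q1.toFinset.card).image v))
    {I : Finset ℕ} (hI : I = P2.toFinset ∨ I = Q2.toFinset)
    (hdead : ¬ domLE I ((seg I.card).image v)) :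
    ¬ domLE I ((seg I.card).image (v * w)) := by
  classical
  rw [domLE_iff _ _ (image_mul_card hA hB hsep hv hw v I)] at hdead
  push_neg at hdead
  obtain ⟨x, hx⟩ := hdead
  -- hx : lo I x < lo ((seg I.card).image v) x
  have hxB : x ∉ B := by
    intro hxB
    have hxA : x ∉ A := notin_A_of_in_B hsep hxB
    have hsp := splitPres_of_closure hv hxA
    -- counting function on nodup lists
    have key : ∀ l : List ℕ, l.Nodup →
        lo l.toFinset x = l.countP (fun y => decide (y ≤ x)) := by
      intro l hl
      have hval : l.toFinset.val = (l : Multiset ℕ) := by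
        rw [List.toFinset, Multiset.toFinset_val, Multiset.coe_dedup, hl.dedup]
      rw [lo, Finset.card, Finset.filter_val, hval, Multiset.filter_coe]
      simp [List.countP_eq_length_filter]
    have hsum : lo P1.toFinset x + lo Q1.toFinset x
        = lo P2.toFinset x + lo Q2.toFinset x := by
      rw [key _ hn1, key _ hn2, key _ hn3, key _ hn4,
        ← List.countP_append, ← List.countP_append]
      exact hperm.countP_eq _
    have hcard1 : P1.toFinset.card = P2.toFinset.card := by
      rw [List.toFinset_card_of_nodup hn1, List.toFinset_card_of_nodup hn3, hlP]
    have hcard2 : Q1.toFinset.card = Q2.toFinset.card := by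
      rw [List.toFinset_card_of_nodup hn2, List.toFinset_card_of_nodup hn4, hlQ]
    -- alive bounds give exact min values for P1, Q1
    have hlow : ∀ (l : List ℕ), l.Nodup →
        domLE l.toFinset ((seg l.toFinset.card).image v) →
        min l.toFinset.card x ≤ lo l.toFinset x := by
      intro l hl hdom
      rw [domLE_iff _ _ (image_mul_card hA hB hsep hv hw v _)] at hdom
      calc min l.toFinset.card x = lo (seg l.toFinset.card) x := (lo_seg _ _).symm
      _ = lo ((seg l.toFinset.card).image v) x :=
          (lo_image_of_splitPres v _ x hsp).symm
      _ ≤ _ := hdom x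
    have hP1 := hlow P1 hn1 halive1
    have hQ1 := hlow Q1 hn2 halive2
    -- upper bounds for P2 Q2
    have hsub2 : P2.toFinset ⊆ Finset.Icc 1 n' := by
      intro y hy
      exact hel y (List.mem_append_left _ (List.mem_toFinset.mp hy))
    have hsub3 : Q2.toFinset ⊆ Finset.Icc 1 n' := by
      intro y hy
      exact hel y (List.mem_append_right _ (List.mem_toFinset.mp hy))
    have hup2 := lo_le_of_subset hsub2 x
    have hup3 := lo_le_of_subset hsub3 x
    -- the dead variable has lo < min card x
    have hvio : lo I x < min I.card x := by
      have : lo ((seg I.card).image v) x = min I.card x := by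
        rw [lo_image_of_splitPres v _ x hsp, lo_seg]
      omega
    rcases hI with rfl | rfl
    · omega
    · omega
  -- x ∉ B : same witness works for v * w
  rw [domLE_iff _ _ (image_mul_card hA hB hsep hv hw (v * w) I)]
  push_neg
  refine ⟨x, ?_⟩
  rw [image_vw_eq hA hB hsep hv hw hxB]
  exact hx

end

-- pinned defs
section
variable {n : ℕ} {v w : Equiv.Perm ℕ} {A B : Finset ℕ}
  (hA : A ⊆ seg (n - 1)) (hB : B ⊆ seg (n - 1))
  (hsep : ∀ a ∈ A, ∀ b ∈ B, 1 < |(a : ℤ) - (b : ℤ)|)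
  (hv : v ∈ Subgroup.closure ((fun t => Equiv.swap t (t + 1)) '' (A : Set ℕ)))
  (hw : w ∈ Subgroup.closure ((fun t => Equiv.swap t (t + 1)) '' (B : Set ℕ)))

include hA hB hsep hv hw

lemma mem_support_pair_left (X Y : Finset ℕ) :
    X ∈ (Finsupp.single X 1 + Finsupp.single Y 1 : Finset ℕ →₀ ℕ).support := by
  rw [Finsupp.mem_support_iff, Finsupp.add_apply, Finsupp.single_eq_same]
  omega

lemma main_transfer (k : ℕ) (J L : List ℕ) (hvp : ValidPair n k J L)
    (hdeg : DegToMono n v k J L) : DegToMono n (v * w) k J L := by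
  classical
  obtain ⟨hJnd, hLnd, hJel, hLel, hJ1, hJL, hLn, hk1, hkJ⟩ := hvp
  obtain ⟨m, a, heq, hne⟩ := hdeg
  set F := pluecker k J L with hF
  set S' := F.support.filter (fun m => ∀ m' ∈ F.support, mwt n m ≤ mwt n m') with hS'
  have hG : initw n F = ∑ m' ∈ S', monomial m' (F.coeff m') := rfl
  -- basic consequences
  have hmemV : initw n F - monomial m a ∈ vanishIdeal n v := by
    rwa [Ideal.Quotient.eq] at heq
  have hnotmem : (monomial m a : MvPolynomial (Finset ℕ) ℂ) ∉ vanishIdeal n v := by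
    intro h
    exact hne (Ideal.Quotient.eq_zero_iff_mem.mpr h)
  have ha : a ≠ 0 := by
    rintro rfl
    apply hnotmem
    rw [map_zero]
    exact Ideal.zero_mem _
  have halive_m : ∀ I ∈ m.support, ¬ Pdead n v I := by
    intro I hI hP
    exact hnotmem (monomial_mem_of_dead hI hP)
  -- phi_v of initw = monomial m a
  have hphiv : phi n v (initw n F) = monomial m a := by
    have h1 : phi n v (initw n F - monomial m a) = 0 := phi_eq_zero_of_mem hmemV
    rw [map_sub, sub_eq_zero] at h1
    rw [h1, phi_monomial_alive halive_m]
  -- structure of alive terms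
  have halive_struct : ∀ I, (∀ I' ∈ m.support, ¬ Pdead n v I') → I ∈ m.support →
      ValidIndex n I → domLE I ((seg I.card).image v) := by
    intro I hal hI hvalid
    by_contra hdom
    exact hal I hI ⟨hvalid, hdom⟩
  -- the alive set of S' is {m}
  set T := S'.filter (fun m' => ∀ I ∈ m'.support, ¬ Pdead n v I) with hT
  have hsumT : ∑ m' ∈ T, (monomial m' (F.coeff m') : MvPolynomial (Finset ℕ) ℂ)
      = monomial m a := by
    rw [← hphiv, hG, map_sum, hT, Finset.sum_filter]
    apply Finset.sum_congr rfl
    intro m' _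
    by_cases hal : ∀ I ∈ m'.support, ¬ Pdead n v I
    · rw [if_pos hal, phi_monomial_alive hal]
    · rw [if_neg hal]
      push_neg at hal
      obtain ⟨I0, hI0, hP⟩ := hal
      rw [phi_monomial_dead hI0 hP]
  have hTm : ∀ m' ∈ T, m' = m := by
    intro m' hm'
    have h1 : F.coeff m' ≠ 0 := by
      have : m' ∈ F.support := Finset.mem_filter.mp ((Finset.mem_filter.mp hm').1) |>.1
      exact MvPolynomial.mem_support_iff.mp this
    have h2 := congrArg (MvPolynomial.coeff m') hsumT
    rw [MvPolynomial.coeff_sum] at h2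
    have h3 : ∑ m'' ∈ T, MvPolynomial.coeff m' (monomial m'' (F.coeff m''))
        = F.coeff m' := by
      rw [Finset.sum_eq_single_of_mem m' hm']
      · rw [MvPolynomial.coeff_monomial, if_pos rfl]
      · intro b _ hbne
        rw [MvPolynomial.coeff_monomial, if_neg hbne]
    rw [h3, MvPolynomial.coeff_monomial] at h2
    by_contra hne'
    rw [if_neg (fun hh => hne' hh.symm)] at h2
    exact h1 h2
  have hmT : m ∈ T := by
    by_contra hmT
    have h2 := congrArg (MvPolynomial.coeff m) hsumT
    rw [MvPolynomial.coeff_sum] at h2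
    have h3 : ∑ m'' ∈ T, MvPolynomial.coeff m (monomial m'' (F.coeff m'')) = 0 := by
      apply Finset.sum_eq_zero
      intro b hb
      rw [MvPolynomial.coeff_monomial, if_neg]
      intro hbm
      exact hmT (hbm ▸ hb)
    rw [h3, MvPolynomial.coeff_monomial, if_pos rfl] at h2
    exact ha h2.symm
  have hmS' : m ∈ S' := (Finset.mem_filter.mp hmT).1
  have hcoefm : F.coeff m = a := by
    have h2 := congrArg (MvPolynomial.coeff m) hsumT
    rw [MvPolynomial.coeff_sum] at h2
    have h3 : ∑ m'' ∈ T, MvPolynomial.coeff m (monomial m'' (F.coeff m''))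
        = F.coeff m := by
      rw [Finset.sum_eq_single_of_mem m hmT]
      · rw [MvPolynomial.coeff_monomial, if_pos rfl]
      · intro b hb hbne
        rw [MvPolynomial.coeff_monomial, if_neg hbne]
    rw [h3, MvPolynomial.coeff_monomial, if_pos rfl] at h2
    exact h2
  -- m is alive for v*w
  have halive_vw : ∀ I ∈ m.support, ¬ Pdead n (v * w) I := by
    intro I hI hP
    have h1 : domLE I ((seg I.card).image v) :=
      halive_struct I halive_m hI hP.1
    exact hP.2 (alive_transfer hA hB hsep hv hw h1)
  -- structure data for m
  have hmF : m ∈ F.support := (Finset.mem_filter.mp hmS').1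
  obtain ⟨P1, Q1, hn1, hn2, hl1, hl2, hperm1, hmeq⟩ := support_pluecker hkJ hmF
  -- validity of index sets coming from the structure
  have hvalid_of : ∀ (P Q : List ℕ), P.Nodup → Q.Nodup → P.length = J.length →
      Q.length = L.length → (P ++ Q).Perm (J ++ L) →
      ValidIndex n P.toFinset ∧ ValidIndex n Q.toFinset := by
    intro P Q hP hQ hlP hlQ hpm
    have hel : ∀ y ∈ P ++ Q, y ∈ seg n := by
      intro y hy
      have := hpm.mem_iff.mp hy
      rw [List.mem_append] at this
      rcases this with h | h
      · exact hJel y h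
      · exact hLel y h
    have hcP : P.toFinset.card = P.length := List.toFinset_card_of_nodup hP
    have hcQ : Q.toFinset.card = Q.length := List.toFinset_card_of_nodup hQ
    constructor
    · refine ⟨?_, ?_, ?_⟩
      · rw [← Finset.card_pos, hcP, hlP]; omega
      · intro y hy
        exact hel y (List.mem_append_left _ (List.mem_toFinset.mp hy))
      · rw [hcP, hlP]; omega
    · refine ⟨?_, ?_, ?_⟩
      · rw [← Finset.card_pos, hcQ, hlQ]; omega
      · intro y hy
        exact hel y (List.mem_append_right _ (List.mem_toFinset.mp hy))
      · rw [hcQ, hlQ]; omega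
  obtain ⟨hvP1, hvQ1⟩ := hvalid_of P1 Q1 hn1 hn2 hl1 hl2 hperm1
  have hP1mem : P1.toFinset ∈ m.support := by
    rw [hmeq]; exact mem_support_pair_left hA hB hsep hv hw _ _
  have hQ1mem : Q1.toFinset ∈ m.support := by
    rw [hmeq, add_comm]; exact mem_support_pair_left hA hB hsep hv hw _ _
  have halive1 : domLE P1.toFinset ((seg P1.toFinset.card).image v) :=
    halive_struct _ halive_m hP1mem hvP1
  have halive2 : domLE Q1.toFinset ((seg Q1.toFinset.card).image v) :=
    halive_struct _ halive_m hQ1mem hvQ1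
  -- phi_vw of initw is the monomial
  have hphivw : phi n (v * w) (initw n F) = monomial m a := by
    rw [hG, map_sum]
    rw [Finset.sum_eq_single_of_mem m hmS']
    · rw [hcoefm, phi_monomial_alive halive_vw]
    · intro m' hm'S hne'
      have hdead' : ∃ I ∈ m'.support, Pdead n v I := by
        by_contra hal
        push_neg at hal
        have : m' ∈ T := Finset.mem_filter.mpr ⟨hm'S, fun I hI => hal I hI⟩
        exact hne' (hTm m' this)
      obtain ⟨I0, hI0, hP0⟩ := hdead'
      have hm'F : m' ∈ F.support := (Finset.mem_filter.mp hm'S).1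
      obtain ⟨P2, Q2, hn3, hn4, hl3, hl4, hperm2, hm'eq⟩ := support_pluecker hkJ hm'F
      have hI0mem : I0 = P2.toFinset ∨ I0 = Q2.toFinset := by
        have := hI0
        rw [hm'eq] at this
        have h5 := Finsupp.support_add this
        rw [Finset.mem_union] at h5
        rcases h5 with h5 | h5
        · left; exact Finset.mem_singleton.mp (Finsupp.support_single_subset h5)
        · right; exact Finset.mem_singleton.mp (Finsupp.support_single_subset h5)
      have hel2 : ∀ y ∈ P2 ++ Q2, y ∈ Finset.Icc 1 n := by
        intro y hy
        have := hperm2.mem_iff.mp hy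
        rw [List.mem_append] at this
        rcases this with h | h
        · exact hJel y h
        · exact hLel y h
      have hddvw : ¬ domLE I0 ((seg I0.card).image (v * w)) :=
        dead_transfer hA hB hsep hv hw hn1 hn2 hn3 hn4
          (by omega) (by omega) (hperm1.trans hperm2.symm) hel2 halive1 halive2 hI0mem hP0.2
      exact phi_monomial_dead hI0 ⟨hP0.1, hddvw⟩
  -- conclude
  refine ⟨m, a, ?_, ?_⟩
  · rw [Ideal.Quotient.eq, ← hphivw]
    exact sub_phi_mem n (v * w) _
  · intro h
    have hmem := Ideal.Quotient.eq_zero_iff_mem.mp h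
    have := phi_eq_zero_of_mem hmem
    rw [phi_monomial_alive halive_vw] at this
    rw [MvPolynomial.monomial_eq_zero] at this
    exact ha this

end

/-- if some Plücker relation degenerates to a monomial on `X_v` or on `X_w`,
then some Plücker relation degenerates to a monomial on `X_{vw}`. -/
theorem stmt_16 (n : ℕ) (hn : 2 ≤ n) (v w : Equiv.Perm ℕ)
    (A B : Finset ℕ) (hA : A ⊆ seg (n - 1)) (hB : B ⊆ seg (n - 1))
    (hsep : ∀ a ∈ A, ∀ b ∈ B, 1 < |(a : ℤ) - (b : ℤ)|)
    (hv : v ∈ Subgroup.closure ((fun t => Equiv.swap t (t + 1)) '' (A : Set ℕ)))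
    (hw : w ∈ Subgroup.closure ((fun t => Equiv.swap t (t + 1)) '' (B : Set ℕ)))
    (hmono : (∃ k J L, ValidPair n k J L ∧ DegToMono n v k J L) ∨
             (∃ k J L, ValidPair n k J L ∧ DegToMono n w k J L)) :
    ∃ k J L, ValidPair n k J L ∧ DegToMono n (v * w) k J L := by
  rcases hmono with ⟨k, J, L, hvp, hdeg⟩ | ⟨k, J, L, hvp, hdeg⟩
  · exact ⟨k, J, L, hvp, main_transfer hA hB hsep hv hw k J L hvp hdeg⟩
  · have hsep' : ∀ b ∈ B, ∀ a ∈ A, 1 < |(b : ℤ) - (a : ℤ)| := by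
      intro b hb a ha
      rw [abs_sub_comm]
      exact hsep a ha b hb
    have h := main_transfer hB hA hsep' hw hv k J L hvp hdeg
    have hcomm : v * w = w * v := commute_of_closures hsep hv hw
    rw [hcomm]
    exact ⟨k, J, L, hvp, h⟩

end DegSchubert
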